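/- arXiv:1710.08379 — 2 statements merged into one kernel-verified Lean document; each statement's English description precedes it below -/
import Mathlib

section
/- Let λ ≥ 1 be an integer and let (W_n) be a sequence of BMS channels with δ_n := 1 − I(W_n) > 0 for all n and δ_n → 0 as n → ∞. Then: (i) for the all-minus sign sequence of length λ, (1 − I(W_n^{−⋯−}))/δ_n → 2^λ as n → ∞; and (ii) for every sign sequence s ∈ {+,−}^λ containing at least one +, (1 − I(W_n^s))/δ_n → 0 as n → ∞. -/
open scoped BigOperators

/-- A binary-input discrete channel: a finite output alphabet `Y` and a kernel
`W x y` = probability of output `y` given input `x`. -/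
structure PreChannel where
  Y : Type
  [fin : Fintype Y]
  W : Bool → Y → ℝ

attribute [instance] PreChannel.fin

namespace PreChannel

/-- `W` is a valid binary memoryless symmetric (BMS) channel. -/
def IsBMS (W : PreChannel) : Prop :=
  (∀ x y, 0 ≤ W.W x y) ∧ (∀ x, ∑ y, W.W x y = 1) ∧
    ∃ π : W.Y → W.Y, Function.Involutive π ∧ ∀ y, W.W false (π y) = W.W true y

/-- The polar "minus" transform `W⁻`. -/
noncomputable def minus (W : PreChannel) : PreChannel where
  Y := W.Y × W.Y
  fin := inferInstance
  W := fun u₁ p => ∑ u₂ : Bool, (1 / 2) * W.W (Bool.xor u₁ u₂) p.1 * W.W u₂ p.2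

/-- The polar "plus" transform `W⁺`; output is `(y₁, y₂, u₁)`. -/
noncomputable def plus (W : PreChannel) : PreChannel where
  Y := W.Y × W.Y × Bool
  fin := inferInstance
  W := fun u₂ p => (1 / 2) * W.W (Bool.xor p.2.2 u₂) p.1 * W.W u₂ p.2.1

/-- Capacity `I(W)` (in bits). -/
noncomputable def cap (W : PreChannel) : ℝ :=
  ∑ x : Bool, ∑ y, (1 / 2) * W.W x y *
    Real.logb 2 (W.W x y / ((1 / 2) * W.W false y + (1 / 2) * W.W true y))

/-- Dispersion `V(W)`. -/
noncomputable def disp (W : PreChannel) : ℝ :=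
  (∑ x : Bool, ∑ y, (1 / 2) * W.W x y *
      (Real.logb 2 (W.W x y / ((1 / 2) * W.W false y + (1 / 2) * W.W true y))) ^ 2)
    - cap W ^ 2

/-- Gallager's function `E₀(W, ρ)` (natural logarithm). -/
noncomputable def E0 (W : PreChannel) (ρ : ℝ) : ℝ :=
  - Real.log
      (∑ y, ((1 / 2) * (W.W false y ^ (1 / (1 + ρ)) + W.W true y ^ (1 / (1 + ρ)))) ^ (1 + ρ))

/-- Bhattacharyya parameter `Z(W)`. -/
noncomputable def Zb (W : PreChannel) : ℝ := ∑ y, Real.sqrt (W.W false y * W.W true y)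

/-- `E_x(W, ρ) = −ρ ln[(1 + Z(W)^{1/ρ})/2]`. -/
noncomputable def Ex (W : PreChannel) (ρ : ℝ) : ℝ :=
  - ρ * Real.log ((1 + Zb W ^ (1 / ρ)) / 2)

/-- Random-coding exponent `E_r(W, R)` as an extended real:
`max_{0 ≤ ρ ≤ 1} [E₀(W,ρ) − ρ R ln 2]` for `0 < R ≤ 1`, `+∞` at `R = 0`, `0` for `R > 1`. -/
noncomputable def Er (W : PreChannel) (R : ℝ) : EReal :=
  if R = 0 then ⊤
  else if 1 < R then 0
  else ((sSup {x : ℝ | ∃ ρ ∈ Set.Icc (0 : ℝ) 1, x = E0 W ρ - ρ * R * Real.log 2} : ℝ) : EReal)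

/-- Expurgated exponent `E_ex(W, R) = sup_{ρ ≥ 1} [E_x(W,ρ) − ρ R ln 2]`. -/
noncomputable def Eex (W : PreChannel) (R : ℝ) : EReal :=
  ⨆ ρ : {ρ : ℝ // 1 ≤ ρ}, ((Ex W ρ.1 - ρ.1 * R * Real.log 2 : ℝ) : EReal)

/-- `E(W, R) = max [E_r(W,R), E_ex(W,R)]` for `R ≤ 1`, and `0` for `R > 1`. -/
noncomputable def Echan (W : PreChannel) (R : ℝ) : EReal :=
  if 1 < R then 0 else max (Er W R) (Eex W R)

/-- `E(W, R, N₁) = max [E_r(W,R), E_ex(W, R + 2/N₁)]`. -/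
noncomputable def EchanN (W : PreChannel) (R : ℝ) (N₁ : ℕ) : EReal :=
  max (Er W R) (Eex W (R + 2 / (N₁ : ℝ)))

/-- Sub-channel `Wᵢ` after `lam` polarization steps: the most significant bit of `i`
is applied first, bit `1` = plus, bit `0` = minus. -/
noncomputable def subch : PreChannel → (lam : ℕ) → ℕ → PreChannel
  | W, 0, _ => W
  | W, l + 1, i => subch (if i / 2 ^ l % 2 = 1 then W.plus else W.minus) l (i % 2 ^ l)

/-- `W^s` for a sign sequence `s` (`true` = plus, `false` = minus), applied in order. -/
noncomputable def polarSeq : PreChannel → List Bool → PreChannel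
  | W, [] => W
  | W, b :: rest => polarSeq (if b then W.plus else W.minus) rest

/-- `exp(−t·E)` for `E ∈ [0, +∞]`, with the convention `exp(−∞) = 0`. -/
noncomputable def dexp (t : ℝ) (E : EReal) : ℝ :=
  if E = ⊤ then 0 else Real.exp (-t * E.toReal)

/-- `−ln s` with the convention `−ln 0 = +∞`. -/
noncomputable def nlog (s : ℝ) : EReal :=
  if s ≤ 0 then ⊤ else ((-Real.log s : ℝ) : EReal)

/-- The finite-blocklength exponent `E_λ(W, R, N₁)`:
`(1/(N₁ 2^λ)) · max over admissible rate tuples of −ln Σᵢ exp(−N₁ E(Wᵢ, Rᵢ, N₁))`. -/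
noncomputable def ElamN (W : PreChannel) (lam N₁ : ℕ) (R : ℝ) : EReal :=
  ((1 / ((N₁ : ℝ) * 2 ^ lam) : ℝ) : EReal) *
    sSup {v : EReal | ∃ Rv : Fin (2 ^ lam) → ℝ,
      (∀ i, Rv i ∈ Set.Icc (0 : ℝ) 1 ∧ ∃ k : ℤ, Rv i * (N₁ : ℝ) = (k : ℝ)) ∧
      (∑ i, Rv i) = 2 ^ lam * R ∧
      v = nlog (∑ i : Fin (2 ^ lam), dexp (N₁ : ℝ) (EchanN (subch W lam (i : ℕ)) (Rv i) N₁))}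

/-- The asymptotic exponent `E_λ(W, R)`, defined recursively;
`E_λ(W,R) = 0` for `R > 1` by convention. -/
noncomputable def ElamInf : PreChannel → ℕ → ℝ → EReal
  | W, 0, R => Echan W R
  | W, l + 1, R =>
      if 1 < R then 0
      else ((1 / 2 : ℝ) : EReal) *
        sSup {v : EReal | ∃ R₁ ∈ Set.Icc (max 0 (2 * R - 1)) (min 1 (2 * R)),
          v = min (ElamInf W.minus l R₁) (ElamInf W.plus l (2 * R - R₁))}

/-- `V_λ(W) = (Σᵢ √V(Wᵢ))² / 2^λ`. -/
noncomputable def Vlam (W : PreChannel) (lam : ℕ) : ℝ :=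
  (∑ i ∈ Finset.range (2 ^ lam), Real.sqrt (disp (subch W lam i))) ^ 2 / 2 ^ lam

end PreChannel

/-- Binary entropy function (base 2), with `h2 0 = h2 1 = 0`. -/
noncomputable def h2 (x : ℝ) : ℝ := -x * Real.logb 2 x - (1 - x) * Real.logb 2 (1 - x)

/-- Inverse of the binary entropy function, with values in `[0, 1/2]`. -/
noncomputable def h2inv (v : ℝ) : ℝ := Function.invFunOn h2 (Set.Icc 0 (1 / 2)) v

/-- `ε_h(x) = x − x²`. -/
noncomputable def epsh (x : ℝ) : ℝ := x - x ^ 2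

/-- `ε_l(x) = x − 1 + h₂(h₂⁻¹(1−x)·[2 − 2 h₂⁻¹(1−x)])`. -/
noncomputable def epsl (x : ℝ) : ℝ :=
  x - 1 + h2 (h2inv (1 - x) * (2 - 2 * h2inv (1 - x)))

/-- The binary symmetric channel with crossover probability `p`. -/
noncomputable def BSC (p : ℝ) : PreChannel where
  Y := Bool
  fin := inferInstance
  W := fun x y => if y = x then 1 - p else p

/-- The binary erasure channel with erasure probability `δ` (`none` = erasure). -/
noncomputable def BEC (δ : ℝ) : PreChannel where
  Y := Option Bool
  fin := inferInstance
  W := fun x y => match y with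
    | none => δ
    | some b => if b = x then 1 - δ else 0

/-- The channel-independent lower bound `Ê_λ(I, R)`. -/
noncomputable def Ehat : ℕ → ℝ → ℝ → EReal
  | 0, I, R => PreChannel.Echan (BSC (h2inv (1 - I))) R
  | l + 1, I, R =>
      ((1 / 2 : ℝ) : EReal) *
        sInf {w : EReal | ∃ ε ∈ Set.Icc (epsl I) (epsh I),
          w = sSup {v : EReal | ∃ R₁ ∈ Set.Icc (max 0 (2 * R - 1)) (min 1 (2 * R)),
            v = min (Ehat l (I - ε) R₁) (Ehat l (I + ε) (2 * R - R₁))}}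

/-- The Gaussian Q-function. -/
noncomputable def gaussQ (u : ℝ) : ℝ :=
  ∫ t in Set.Ioi u, (Real.sqrt (2 * Real.pi))⁻¹ * Real.exp (-t ^ 2 / 2)

open PreChannel

open Real
noncomputable def q (x : ℝ) : ℝ := x * Real.logb 2 x
lemma q_mul {x y : ℝ} (hx : 0 ≤ x) (hy : 0 ≤ y) : q (x*y) = y * q x + x * q y := by
  rcases hx.eq_or_lt with h|h
  · simp [q, ← h]
  rcases hy.eq_or_lt with h'|h'
  · simp [q, ← h']
  · simp [q, Real.logb_mul h.ne' h'.ne']; ring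

noncomputable def phi (a b : ℝ) : ℝ := q (a+b) - q a - q b

lemma phi_symm (a b : ℝ) : phi a b = phi b a := by simp [phi, add_comm]; ring

lemma phi_nonneg {a b : ℝ} (ha : 0 ≤ a) (hb : 0 ≤ b) : 0 ≤ phi a b := by
  rcases ha.eq_or_lt with h|h
  · simp [phi, q, ← h]
  rcases hb.eq_or_lt with h'|h'
  · simp [phi, q, ← h']
  have h1 : q a ≤ a * Real.logb 2 (a+b) :=
    mul_le_mul_of_nonneg_left (Real.logb_le_logb_of_le one_lt_two h (by linarith)) ha
  have h2 : q b ≤ b * Real.logb 2 (a+b) :=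
    mul_le_mul_of_nonneg_left (Real.logb_le_logb_of_le one_lt_two h' (by linarith)) hb
  have : q (a+b) = (a+b) * Real.logb 2 (a+b) := rfl
  simp only [phi]; nlinarith

lemma phi_smul {a b c : ℝ} (ha : 0 ≤ a) (hb : 0 ≤ b) (hc : 0 ≤ c) :
    phi (c*a) (c*b) = c * phi a b := by
  have : c*a + c*b = c*(a+b) := by ring
  simp only [phi, this, q_mul hc ha, q_mul hc hb, q_mul hc (by linarith : (0:ℝ) ≤ a+b)]
  ring

lemma phi_le_aux {a b : ℝ} (ha : 0 < a) (hab : a ≤ b) : phi a b ≤ 5 * Real.sqrt (a*b) := by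
  have hb : 0 < b := lt_of_lt_of_le ha hab
  have hsum : (0:ℝ) < a + b := by linarith
  have hexp : phi a b = (a * Real.log ((a+b)/a) + b * Real.log ((a+b)/b)) / Real.log 2 := by
    simp only [phi, q, Real.logb, Real.log_div hsum.ne' ha.ne', Real.log_div hsum.ne' hb.ne']
    field_simp
    ring
  have hsq : Real.sqrt (a*b) = Real.sqrt a * Real.sqrt b := Real.sqrt_mul ha.le b
  have h1 : b * Real.log ((a+b)/b) ≤ Real.sqrt (a*b) := by
    have := Real.log_le_sub_one_of_pos (show (0:ℝ) < (a+b)/b by positivity)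
    have hb' : b * ((a+b)/b - 1) = a := by field_simp; ring
    have ha2 : a ≤ Real.sqrt (a*b) := by
      rw [hsq]
      nlinarith [Real.sq_sqrt ha.le, Real.sq_sqrt hb.le, Real.sqrt_nonneg a,
        Real.sqrt_le_sqrt hab, Real.sqrt_nonneg b]
    nlinarith
  have h2 : a * Real.log ((a+b)/a) ≤ a * Real.log 2 + 2 * Real.sqrt (a*b) - 2*a := by
    have hle : (a+b)/a ≤ 2*(b/a) := by
      rw [div_le_iff₀ ha]
      have : 2*(b/a)*a = 2*b := by field_simp
      rw [this]; linarith
    have hlog1 : Real.log ((a+b)/a) ≤ Real.log (2*(b/a)) :=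
      Real.log_le_log (by positivity) hle
    have hlog2 : Real.log (2*(b/a)) = Real.log 2 + Real.log (b/a) :=
      Real.log_mul two_ne_zero (by positivity)
    have hsqrtlog : Real.log (b/a) ≤ 2 * (Real.sqrt (b/a) - 1) := by
      have h := Real.log_le_sub_one_of_pos (show (0:ℝ) < Real.sqrt (b/a) by positivity)
      have : Real.log (Real.sqrt (b/a)) = Real.log (b/a) / 2 := Real.log_sqrt (by positivity)
      linarith
    have hs : a * Real.sqrt (b/a) = Real.sqrt (a*b) := by
      rw [show a * Real.sqrt (b/a) = Real.sqrt (a^2) * Real.sqrt (b/a) by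
        rw [Real.sqrt_sq ha.le], ← Real.sqrt_mul (by positivity)]
      congr 1; field_simp
    nlinarith [Real.sqrt_nonneg (b/a)]
  have hlog2pos : (0:ℝ) < Real.log 2 := Real.log_pos one_lt_two
  have hlog2lt : Real.log 2 < 0.6931471808 := Real.log_two_lt_d9
  have hlog2gt : 0.6931471803 < Real.log 2 := Real.log_two_gt_d9
  rw [hexp, div_le_iff₀ hlog2pos]
  have hs0 : 0 ≤ Real.sqrt (a*b) := Real.sqrt_nonneg _
  nlinarith

lemma phi_le {a b : ℝ} (ha : 0 ≤ a) (hb : 0 ≤ b) : phi a b ≤ 5 * Real.sqrt (a*b) := by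
  rcases ha.eq_or_lt with h|h
  · have : phi a b = 0 := by simp [phi, q, ← h]
    rw [this]; positivity
  rcases hb.eq_or_lt with h'|h'
  · have : phi a b = 0 := by simp [phi, q, ← h']
    rw [this]; positivity
  rcases le_total a b with hab|hab
  · exact phi_le_aux h hab
  · rw [phi_symm, mul_comm a b]; exact phi_le_aux h' hab

namespace PreChannel

def Valid (V : PreChannel) : Prop := (∀ x y, 0 ≤ V.W x y) ∧ ∀ x : Bool, ∑ y, V.W x y = 1

noncomputable def D (V : PreChannel) : ℝ := ∑ y, phi (V.W false y / 2) (V.W true y / 2)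

lemma D_nonneg {V : PreChannel} (hV : Valid V) : 0 ≤ D V :=
  Finset.sum_nonneg fun y _ => phi_nonneg (by linarith [hV.1 false y]) (by linarith [hV.1 true y])

lemma sum_mu {V : PreChannel} (hV : Valid V) :
    ∑ y, (V.W false y / 2 + V.W true y / 2) = 1 := by
  rw [Finset.sum_add_distrib, ← Finset.sum_div, ← Finset.sum_div, hV.2 false, hV.2 true]
  norm_num

lemma pointlem {a b : ℝ} (ha : 0 ≤ a) (hb : 0 ≤ b) :
    a * Real.logb 2 (2*a/(a+b)) + b * Real.logb 2 (2*b/(a+b)) = (a+b) - phi a b := by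
  rcases ha.eq_or_lt with h|h
  · rcases hb.eq_or_lt with h'|h'
    · simp [← h, ← h', phi, q]
    · have hphi : phi a b = 0 := by simp [phi, q, ← h]
      have harg : 2*b/(a+b) = 2 := by rw [← h]; field_simp; ring
      rw [hphi, harg, ← h]
      simp [Real.logb_self_eq_one one_lt_two]
  rcases hb.eq_or_lt with h'|h'
  · have hphi : phi a b = 0 := by simp [phi, q, ← h']
    have harg : 2*a/(a+b) = 2 := by rw [← h']; field_simp; ring
    rw [hphi, harg, ← h']
    simp [Real.logb_self_eq_one one_lt_two]
  · have hμ : (0:ℝ) < a + b := by linarith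
    have e1 : Real.logb 2 (2*a/(a+b)) = 1 + Real.logb 2 a - Real.logb 2 (a+b) := by
      rw [Real.logb_div (by positivity) hμ.ne', Real.logb_mul two_ne_zero h.ne',
        Real.logb_self_eq_one one_lt_two]
    have e2 : Real.logb 2 (2*b/(a+b)) = 1 + Real.logb 2 b - Real.logb 2 (a+b) := by
      rw [Real.logb_div (by positivity) hμ.ne', Real.logb_mul two_ne_zero h'.ne',
        Real.logb_self_eq_one one_lt_two]
    rw [e1, e2]
    simp only [phi, q]
    ring

lemma one_sub_cap {V : PreChannel} (hV : Valid V) : 1 - cap V = D V := by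
  have hc : cap V = ∑ y, ((V.W false y / 2 + V.W true y / 2)
      - phi (V.W false y / 2) (V.W true y / 2)) := by
    rw [cap, Fintype.sum_bool, ← Finset.sum_add_distrib]
    refine Finset.sum_congr rfl fun y _ => ?_
    have ha := hV.1 false y
    have hb := hV.1 true y
    have := pointlem (a := V.W false y / 2) (b := V.W true y / 2)
      (by linarith) (by linarith)
    have e1 : V.W true y / ((1/2) * V.W false y + (1/2) * V.W true y)
        = 2*(V.W true y / 2)/(V.W false y / 2 + V.W true y / 2) := by ring_nf
    have e2 : V.W false y / ((1/2) * V.W false y + (1/2) * V.W true y)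
        = 2*(V.W false y / 2)/(V.W false y / 2 + V.W true y / 2) := by ring_nf
    rw [e1, e2]
    calc (1/2) * V.W true y * Real.logb 2 (2*(V.W true y / 2)/(V.W false y / 2 + V.W true y / 2))
          + (1/2) * V.W false y * Real.logb 2 (2*(V.W false y / 2)/(V.W false y / 2 + V.W true y / 2))
        = (V.W false y / 2) * Real.logb 2 (2*(V.W false y / 2)/(V.W false y / 2 + V.W true y / 2))
          + (V.W true y / 2) * Real.logb 2 (2*(V.W true y / 2)/(V.W false y / 2 + V.W true y / 2)) := by ring
      _ = _ := by rw [this]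
  rw [hc, Finset.sum_sub_distrib, sum_mu hV, D]
  ring


lemma phi_chain {a b c d : ℝ} (ha : 0 ≤ a) (hb : 0 ≤ b) (hc : 0 ≤ c) (hd : 0 ≤ d) :
    (c+d) * phi a b + (a+b) * phi c d
      = phi (a*c+b*d) (a*d+b*c) + phi (a*c) (b*d) + phi (b*c) (a*d) := by
  have hab : (0:ℝ) ≤ a + b := by linarith
  have hcd : (0:ℝ) ≤ c + d := by linarith
  have e1 := q_mul hab hcd
  have e2 := q_mul ha hc
  have e3 := q_mul hb hd
  have e4 := q_mul hb hc
  have e5 := q_mul ha hd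
  have r1 : a*c+b*d + (a*d+b*c) = (a+b)*(c+d) := by ring
  simp only [phi, r1]
  rw [show b*c + a*d = a*d + b*c from by ring]
  linear_combination e2 + e3 + e4 + e5 - e1

lemma valid_minus {V : PreChannel} (hV : Valid V) : Valid V.minus := by
  constructor
  · intro x p
    show 0 ≤ ∑ u₂ : Bool, 1/2 * V.W (Bool.xor x u₂) p.1 * V.W u₂ p.2
    refine Finset.sum_nonneg fun u _ => ?_
    have h1 := hV.1 (Bool.xor x u) p.1
    have h2 := hV.1 u p.2
    positivity
  · intro x
    show ∑ p : V.Y × V.Y, (∑ u₂ : Bool, 1/2 * V.W (Bool.xor x u₂) p.1 * V.W u₂ p.2) = 1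
    rw [Fintype.sum_prod_type]
    have h2 : ∀ (c d : Bool) (y₁ : V.Y), ∑ y₂, 1/2 * V.W c y₁ * V.W d y₂ = 1/2 * V.W c y₁ := by
      intro c d y₁; rw [← Finset.mul_sum, hV.2 d, mul_one]
    simp_rw [Fintype.sum_bool, Finset.sum_add_distrib, h2]
    rw [← Finset.mul_sum, ← Finset.mul_sum, hV.2, hV.2]
    norm_num

lemma valid_plus {V : PreChannel} (hV : Valid V) : Valid V.plus := by
  constructor
  · intro x p
    show 0 ≤ 1/2 * V.W (Bool.xor p.2.2 x) p.1 * V.W x p.2.1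
    have h1 := hV.1 (Bool.xor p.2.2 x) p.1
    have h2 := hV.1 x p.2.1
    positivity
  · intro x
    show ∑ p : V.Y × V.Y × Bool, 1/2 * V.W (Bool.xor p.2.2 x) p.1 * V.W x p.2.1 = 1
    rw [Fintype.sum_prod_type]
    have h1 : ∀ y₁, ∑ p : V.Y × Bool, 1/2 * V.W (Bool.xor p.2 x) y₁ * V.W x p.1
        = ∑ u : Bool, ∑ y₂, 1/2 * V.W (Bool.xor u x) y₁ * V.W x y₂ := by
      intro y₁
      rw [Fintype.sum_prod_type, Finset.sum_comm]
    simp_rw [h1]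
    have h2 : ∀ (c : Bool) y₁, ∑ y₂, 1/2 * V.W c y₁ * V.W x y₂ = 1/2 * V.W c y₁ := by
      intro c y₁; rw [← Finset.mul_sum, hV.2 x, mul_one]
    simp_rw [Fintype.sum_bool, h2]
    rw [Finset.sum_add_distrib, ← Finset.mul_sum, ← Finset.mul_sum, hV.2, hV.2]
    norm_num

lemma chain {V : PreChannel} (hV : Valid V) : D V.minus + D V.plus = 2 * D V := by
  have hm : D V.minus = ∑ y₁, ∑ y₂,
      phi (V.minus.W false (y₁,y₂)/2) (V.minus.W true (y₁,y₂)/2) := by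
    show ∑ p : V.Y × V.Y, phi (V.minus.W false p / 2) (V.minus.W true p / 2) = _
    rw [Fintype.sum_prod_type]
  have hp : D V.plus = ∑ y₁, ∑ y₂,
      (phi (V.plus.W false (y₁,y₂,false)/2) (V.plus.W true (y₁,y₂,false)/2)
        + phi (V.plus.W false (y₁,y₂,true)/2) (V.plus.W true (y₁,y₂,true)/2)) := by
    show ∑ p : V.Y × V.Y × Bool, phi (V.plus.W false p / 2) (V.plus.W true p / 2) = _
    rw [Fintype.sum_prod_type]
    refine Finset.sum_congr rfl fun y₁ _ => ?_
    rw [Fintype.sum_prod_type]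
    refine Finset.sum_congr rfl fun y₂ _ => ?_
    rw [Fintype.sum_bool, add_comm]
  have key : ∀ y₁ y₂ : V.Y,
      phi (V.minus.W false (y₁,y₂)/2) (V.minus.W true (y₁,y₂)/2)
      + (phi (V.plus.W false (y₁,y₂,false)/2) (V.plus.W true (y₁,y₂,false)/2)
        + phi (V.plus.W false (y₁,y₂,true)/2) (V.plus.W true (y₁,y₂,true)/2))
      = (V.W false y₂/2 + V.W true y₂/2) * phi (V.W false y₁/2) (V.W true y₁/2)
        + (V.W false y₁/2 + V.W true y₁/2) * phi (V.W false y₂/2) (V.W true y₂/2) := by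
    intro y₁ y₂
    have ha := hV.1 false y₁; have hb := hV.1 true y₁
    have hc := hV.1 false y₂; have hd := hV.1 true y₂
    have e0 : V.minus.W false (y₁,y₂) = 1/2 * V.W true y₁ * V.W true y₂
        + 1/2 * V.W false y₁ * V.W false y₂ := by
      show ∑ u₂ : Bool, 1/2 * V.W (Bool.xor false u₂) y₁ * V.W u₂ y₂ = _
      rw [Fintype.sum_bool]; rfl
    have e1 : V.minus.W true (y₁,y₂) = 1/2 * V.W false y₁ * V.W true y₂
        + 1/2 * V.W true y₁ * V.W false y₂ := by
      show ∑ u₂ : Bool, 1/2 * V.W (Bool.xor true u₂) y₁ * V.W u₂ y₂ = _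
      rw [Fintype.sum_bool]; rfl
    have p00 : V.plus.W false (y₁,y₂,false) = 1/2 * V.W false y₁ * V.W false y₂ := rfl
    have p01 : V.plus.W true (y₁,y₂,false) = 1/2 * V.W true y₁ * V.W true y₂ := rfl
    have p10 : V.plus.W false (y₁,y₂,true) = 1/2 * V.W true y₁ * V.W false y₂ := rfl
    have p11 : V.plus.W true (y₁,y₂,true) = 1/2 * V.W false y₁ * V.W true y₂ := rfl
    rw [e0, e1, p00, p01, p10, p11]
    have hchain := phi_chain (a := V.W false y₁/2) (b := V.W true y₁/2)
      (c := V.W false y₂/2) (d := V.W true y₂/2)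
      (by linarith) (by linarith) (by linarith) (by linarith)
    have r1 : (1/2 * V.W true y₁ * V.W true y₂ + 1/2 * V.W false y₁ * V.W false y₂)/2
        = V.W false y₁/2 * (V.W false y₂/2) + V.W true y₁/2 * (V.W true y₂/2) := by ring
    have r2 : (1/2 * V.W false y₁ * V.W true y₂ + 1/2 * V.W true y₁ * V.W false y₂)/2
        = V.W false y₁/2 * (V.W true y₂/2) + V.W true y₁/2 * (V.W false y₂/2) := by ring
    have r3 : (1/2 * V.W false y₁ * V.W false y₂)/2 = V.W false y₁/2 * (V.W false y₂/2) := by ring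
    have r4 : (1/2 * V.W true y₁ * V.W true y₂)/2 = V.W true y₁/2 * (V.W true y₂/2) := by ring
    have r5 : (1/2 * V.W true y₁ * V.W false y₂)/2 = V.W true y₁/2 * (V.W false y₂/2) := by ring
    have r6 : (1/2 * V.W false y₁ * V.W true y₂)/2 = V.W false y₁/2 * (V.W true y₂/2) := by ring
    rw [r1, r2, r3, r4, r5, r6]
    linarith [hchain]
  rw [hm, hp, ← Finset.sum_add_distrib]
  have hcong : ∀ y₁ ∈ (Finset.univ : Finset V.Y),
      (∑ y₂, phi (V.minus.W false (y₁,y₂)/2) (V.minus.W true (y₁,y₂)/2))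
      + (∑ y₂, (phi (V.plus.W false (y₁,y₂,false)/2) (V.plus.W true (y₁,y₂,false)/2)
        + phi (V.plus.W false (y₁,y₂,true)/2) (V.plus.W true (y₁,y₂,true)/2)))
      = ∑ y₂, ((V.W false y₂/2 + V.W true y₂/2) * phi (V.W false y₁/2) (V.W true y₁/2)
        + (V.W false y₁/2 + V.W true y₁/2) * phi (V.W false y₂/2) (V.W true y₂/2)) := by
    intro y₁ _
    rw [← Finset.sum_add_distrib]
    exact Finset.sum_congr rfl fun y₂ _ => key y₁ y₂
  rw [Finset.sum_congr rfl hcong]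
  have s1 : ∀ y₁ : V.Y, ∑ y₂, ((V.W false y₂/2 + V.W true y₂/2)
      * phi (V.W false y₁/2) (V.W true y₁/2)) = phi (V.W false y₁/2) (V.W true y₁/2) := by
    intro y₁; rw [← Finset.sum_mul, sum_mu hV, one_mul]
  have s2 : ∀ y₁ : V.Y, ∑ y₂, ((V.W false y₁/2 + V.W true y₁/2)
      * phi (V.W false y₂/2) (V.W true y₂/2)) = (V.W false y₁/2 + V.W true y₁/2) * D V := by
    intro y₁; rw [← Finset.mul_sum]; rfl
  simp_rw [Finset.sum_add_distrib, s1, s2]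
  rw [← Finset.sum_mul, sum_mu hV, one_mul]
  show D V + D V = 2 * D V
  ring


lemma phi_pos {a b : ℝ} (ha : 0 < a) (hb : 0 < b) : 0 < phi a b := by
  have h1 : q a < a * Real.logb 2 (a+b) :=
    mul_lt_mul_of_pos_left (Real.logb_lt_logb one_lt_two ha (by linarith)) ha
  have h2 : q b < b * Real.logb 2 (a+b) :=
    mul_lt_mul_of_pos_left (Real.logb_lt_logb one_lt_two hb (by linarith)) hb
  have h3 : q (a+b) = (a+b) * Real.logb 2 (a+b) := rfl
  show 0 < q (a+b) - q a - q b
  nlinarith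

noncomputable def HH (x : ℝ) : ℝ := phi x (1-x)

lemma HH_eq (x : ℝ) : HH x = Real.binEntropy x / Real.log 2 := by
  simp only [HH, phi, q, Real.binEntropy, Real.logb, Real.log_inv]
  have : x + (1-x) = 1 := by ring
  rw [this, Real.log_one]
  ring

lemma HH_pos {ε : ℝ} (h0 : 0 < ε) (h1 : ε ≤ 1/2) : 0 < HH ε := phi_pos h0 (by linarith)

lemma HH_mono {ε p : ℝ} (hε : 0 ≤ ε) (hp : p ≤ 1) (h1 : ε ≤ p) (h2 : ε ≤ 1 - p) :
    HH ε ≤ HH p := by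
  rw [HH_eq, HH_eq]
  have hlog2 : (0:ℝ) < Real.log 2 := Real.log_pos one_lt_two
  have hε2 : ε ≤ 2⁻¹ := by linarith
  have hbe : Real.binEntropy ε ≤ Real.binEntropy p := by
    rcases le_total p 2⁻¹ with h|h
    · exact Real.binEntropy_strictMonoOn.monotoneOn ⟨hε, hε2⟩ ⟨by linarith, h⟩ h1
    · rw [← Real.binEntropy_one_sub p]
      exact Real.binEntropy_strictMonoOn.monotoneOn ⟨hε, hε2⟩
        ⟨by linarith, by linarith⟩ h2
  exact (div_le_div_iff_of_pos_right hlog2).mpr hbe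

lemma HH_ge' {m : ℝ} (h0 : 0 < m) (h1 : m ≤ 1/2) : m * Real.logb 2 (1/m) ≤ HH m := by
  have e1 : HH m = - q m - q (1-m) := by
    simp only [HH, phi, q]
    have : m + (1-m) = 1 := by ring
    rw [this]
    simp
  have e2 : m * Real.logb 2 (1/m) = - q m := by
    rw [one_div, Real.logb_inv, q]; ring
  have e3 : q (1-m) ≤ 0 := by
    have hl : Real.logb 2 (1-m) ≤ 0 :=
      Real.logb_nonpos one_lt_two (by linarith) (by linarith)
    have : (0:ℝ) ≤ 1 - m := by linarith
    exact mul_nonpos_of_nonneg_of_nonpos this hl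
  linarith

lemma logb_one_div_ge_one {x : ℝ} (h0 : 0 < x) (h1 : x ≤ 1/2) : 1 ≤ Real.logb 2 (1/x) := by
  have h2 : (2:ℝ) ≤ 1/x := by rw [le_div_iff₀ h0]; linarith
  calc (1:ℝ) = Real.logb 2 2 := (Real.logb_self_eq_one one_lt_two).symm
    _ ≤ Real.logb 2 (1/x) := Real.logb_le_logb_of_le one_lt_two two_pos h2

lemma D_plus_eq (V : PreChannel) : D V.plus = ∑ y₁, ∑ y₂,
    (phi (V.plus.W false (y₁,y₂,false)/2) (V.plus.W true (y₁,y₂,false)/2)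
      + phi (V.plus.W false (y₁,y₂,true)/2) (V.plus.W true (y₁,y₂,true)/2)) := by
  show ∑ p : V.Y × V.Y × Bool, phi (V.plus.W false p / 2) (V.plus.W true p / 2) = _
  rw [Fintype.sum_prod_type]
  refine Finset.sum_congr rfl fun y₁ _ => ?_
  rw [Fintype.sum_prod_type]
  refine Finset.sum_congr rfl fun y₂ _ => ?_
  rw [Fintype.sum_bool, add_comm]

set_option maxHeartbeats 2000000 in
lemma D_plus_le {V : PreChannel} (hV : Valid V) {ε : ℝ} (hε0 : 0 < ε) (hε1 : ε ≤ 1/2) :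
    D V.plus ≤ 10 * (D V^2 / HH ε + D V / Real.logb 2 (1/ε)) := by
  set L := Real.logb 2 (1/ε) with hL
  have hL1 : 1 ≤ L := logb_one_div_ge_one hε0 hε1
  have hLpos : 0 < L := lt_of_lt_of_le one_pos hL1
  have hHpos := HH_pos hε0 hε1
  set a : V.Y → ℝ := fun y => V.W false y / 2 with hadef
  set b : V.Y → ℝ := fun y => V.W true y / 2 with hbdef
  have han : ∀ y, 0 ≤ a y := fun y => by
    have := hV.1 false y; rw [hadef]; dsimp only; linarith
  have hbn : ∀ y, 0 ≤ b y := fun y => by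
    have := hV.1 true y; rw [hbdef]; dsimp only; linarith
  have hDV : D V = ∑ y, phi (a y) (b y) := rfl
  have hDVnn : 0 ≤ D V := D_nonneg hV
  set SZ := ∑ y, Real.sqrt (a y * b y) with hSZ
  -- Step 1 : D V.plus ≤ 10 * SZ^2
  have pt : ∀ y₁ y₂ : V.Y,
      (phi (V.plus.W false (y₁,y₂,false)/2) (V.plus.W true (y₁,y₂,false)/2)
        + phi (V.plus.W false (y₁,y₂,true)/2) (V.plus.W true (y₁,y₂,true)/2))
      ≤ 10 * (Real.sqrt (a y₁ * b y₁) * Real.sqrt (a y₂ * b y₂)) := by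
    intro y₁ y₂
    have hw1 := hV.1 false y₁; have hw2 := hV.1 true y₁
    have hw3 := hV.1 false y₂; have hw4 := hV.1 true y₂
    have p00 : V.plus.W false (y₁,y₂,false) = 1/2 * V.W false y₁ * V.W false y₂ := rfl
    have p01 : V.plus.W true (y₁,y₂,false) = 1/2 * V.W true y₁ * V.W true y₂ := rfl
    have p10 : V.plus.W false (y₁,y₂,true) = 1/2 * V.W true y₁ * V.W false y₂ := rfl
    have p11 : V.plus.W true (y₁,y₂,true) = 1/2 * V.W false y₁ * V.W true y₂ := rfl
    rw [p00, p01, p10, p11]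
    have h1 := phi_le (a := 1/2 * V.W false y₁ * V.W false y₂/2)
      (b := 1/2 * V.W true y₁ * V.W true y₂/2) (by positivity) (by positivity)
    have h2 := phi_le (a := 1/2 * V.W true y₁ * V.W false y₂/2)
      (b := 1/2 * V.W false y₁ * V.W true y₂/2) (by positivity) (by positivity)
    have e1 : (1/2 * V.W false y₁ * V.W false y₂/2) * (1/2 * V.W true y₁ * V.W true y₂/2)
        = (a y₁ * b y₁) * (a y₂ * b y₂) := by rw [hadef, hbdef]; dsimp only; ring
    have e2 : (1/2 * V.W true y₁ * V.W false y₂/2) * (1/2 * V.W false y₁ * V.W true y₂/2)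
        = (a y₁ * b y₁) * (a y₂ * b y₂) := by rw [hadef, hbdef]; dsimp only; ring
    rw [e1] at h1
    rw [e2] at h2
    rw [Real.sqrt_mul (mul_nonneg (han y₁) (hbn y₁))] at h1 h2
    linarith
  have step1 : D V.plus ≤ 10 * SZ^2 := by
    rw [D_plus_eq]
    calc ∑ y₁, ∑ y₂, (phi (V.plus.W false (y₁,y₂,false)/2) (V.plus.W true (y₁,y₂,false)/2)
          + phi (V.plus.W false (y₁,y₂,true)/2) (V.plus.W true (y₁,y₂,true)/2))
        ≤ ∑ y₁, ∑ y₂, 10 * (Real.sqrt (a y₁ * b y₁) * Real.sqrt (a y₂ * b y₂)) :=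
          Finset.sum_le_sum fun y₁ _ => Finset.sum_le_sum fun y₂ _ => pt y₁ y₂
      _ = 10 * SZ^2 := by
          simp_rw [← Finset.mul_sum]
          rw [← Finset.sum_mul, hSZ]
          ring
  -- Step 2 : SZ^2 ≤ D V * (D V / HH ε + 1/L)
  set S : Finset V.Y := Finset.univ.filter (fun y => 0 < phi (a y) (b y)) with hS
  have hmemS : ∀ y ∈ S, 0 < phi (a y) (b y) := by
    intro y hy; rw [hS, Finset.mem_filter] at hy; exact hy.2
  have habS : ∀ y ∈ S, 0 < a y ∧ 0 < b y := by
    intro y hy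
    have hp := hmemS y hy
    rcases (han y).eq_or_lt with h|h
    · exfalso; have : phi (a y) (b y) = 0 := by simp [phi, q, ← h]
      linarith
    rcases (hbn y).eq_or_lt with h'|h'
    · exfalso; have : phi (a y) (b y) = 0 := by simp [phi, q, ← h']
      linarith
    exact ⟨h, h'⟩
  have hSZS : SZ = ∑ y ∈ S, Real.sqrt (a y * b y) := by
    rw [hSZ, hS]
    refine (Finset.sum_filter_of_ne ?_).symm
    intro y _ hne
    have hane : 0 < a y := by
      rcases (han y).eq_or_lt with h|h
      · exfalso; apply hne; rw [← h]; simp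
      · exact h
    have hbne : 0 < b y := by
      rcases (hbn y).eq_or_lt with h|h
      · exfalso; apply hne; rw [← h]; simp
      · exact h
    exact phi_pos hane hbne
  have hCS : SZ^2 ≤ (∑ y ∈ S, phi (a y) (b y)) * (∑ y ∈ S, a y * b y / phi (a y) (b y)) := by
    rw [hSZS]
    refine Finset.sum_sq_le_sum_mul_sum_of_sq_eq_mul S
      (fun y hy => (hmemS y hy).le)
      (fun y hy => div_nonneg (mul_nonneg (han y) (hbn y)) (hmemS y hy).le)
      (fun y hy => ?_)
    rw [Real.sq_sqrt (mul_nonneg (han y) (hbn y))]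
    have hne := (hmemS y hy).ne'
    field_simp
  have hsub1 : (∑ y ∈ S, phi (a y) (b y)) ≤ D V := by
    rw [hDV, hS]
    exact Finset.sum_le_sum_of_subset_of_nonneg (Finset.filter_subset _ _)
      (fun y _ _ => phi_nonneg (han y) (hbn y))
  have pointwise : ∀ y ∈ S, a y * b y / phi (a y) (b y)
      ≤ phi (a y) (b y) / HH ε + (a y + b y) / L := by
    intro y hy
    obtain ⟨ha, hb⟩ := habS y hy
    have hphiy := hmemS y hy
    set μ := a y + b y with hμdef
    have hμ : 0 < μ := by rw [hμdef]; linarith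
    set p := a y / μ with hpdef
    have hp0 : 0 < p := div_pos ha hμ
    have hp1 : p < 1 := by
      rw [hpdef, div_lt_one hμ, hμdef]; linarith
    have hap : a y = μ * p := by rw [hpdef]; field_simp
    have hbp : b y = μ * (1-p) := by
      rw [hpdef, hμdef]; field_simp; ring
    have hphi : phi (a y) (b y) = μ * HH p := by
      rw [hap, hbp, phi_smul hp0.le (by linarith) hμ.le, HH]
    have habval : a y * b y = μ^2 * (p*(1-p)) := by rw [hap, hbp]; ring
    set m := min p (1-p) with hmdef
    have hm0 : 0 < m := lt_min hp0 (by linarith)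
    have hmp : m ≤ p := min_le_left _ _
    have hmq : m ≤ 1 - p := min_le_right _ _
    have hm12 : m ≤ 1/2 := by linarith
    have hple : p*(1-p) ≤ m := le_min (by nlinarith) (by nlinarith)
    have hLm1 : 1 ≤ Real.logb 2 (1/m) := logb_one_div_ge_one hm0 hm12
    have hHHm : m * Real.logb 2 (1/m) ≤ HH m := HH_ge' hm0 hm12
    have hmono : HH m ≤ HH p := HH_mono hm0.le (by linarith) hmp hmq
    have hHm_pos : 0 < HH m := lt_of_lt_of_le (by nlinarith) hHHm
    have hHp_pos : 0 < HH p := hHm_pos.trans_le hmono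
    rcases le_or_gt ε m with hcase|hcase
    · -- ε ≤ m : a*b/phi ≤ phi/HHε
      have hHεp : HH ε ≤ HH p := HH_mono hε0.le (by linarith)
        (le_trans hcase hmp) (le_trans hcase hmq)
      have hab_le : a y * b y ≤ μ * phi (a y) (b y) := by
        rw [habval, hphi]
        have : p*(1-p) ≤ HH p := by nlinarith
        nlinarith
      have t1 : a y * b y / phi (a y) (b y) ≤ μ := by
        rw [div_le_iff₀ hphiy]; nlinarith
      have t2 : μ ≤ phi (a y) (b y) / HH ε := by
        rw [le_div_iff₀ hHpos, hphi]; nlinarith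
      have t3 : 0 ≤ μ/L := div_nonneg hμ.le hLpos.le
      linarith
    · -- m < ε
      have hLm : L ≤ Real.logb 2 (1/m) := by
        rw [hL]
        apply Real.logb_le_logb_of_le one_lt_two (by positivity)
        exact one_div_le_one_div_of_le hm0 hcase.le
      have hmL : m * L ≤ HH p :=
        le_trans (mul_le_mul_of_nonneg_left hLm hm0.le) (le_trans hHHm hmono)
      have hab_L : a y * b y * L ≤ μ * phi (a y) (b y) := by
        rw [habval, hphi]
        have h2 : p*(1-p)*L ≤ m*L := mul_le_mul_of_nonneg_right hple hLpos.le
        calc μ^2*(p*(1-p))*L = μ^2*(p*(1-p)*L) := by ring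
          _ ≤ μ^2*(m*L) := mul_le_mul_of_nonneg_left h2 (by positivity)
          _ ≤ μ^2*(HH p) := mul_le_mul_of_nonneg_left hmL (by positivity)
          _ = μ*(μ*HH p) := by ring
      have t1 : a y * b y / phi (a y) (b y) ≤ μ / L := by
        rw [div_le_div_iff₀ hphiy hLpos]; nlinarith
      have t2 : 0 ≤ phi (a y) (b y) / HH ε := div_nonneg hphiy.le hHpos.le
      linarith
  have hsub2 : (∑ y ∈ S, a y * b y / phi (a y) (b y)) ≤ D V / HH ε + 1/L := by
    calc ∑ y ∈ S, a y * b y / phi (a y) (b y)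
        ≤ ∑ y ∈ S, (phi (a y) (b y) / HH ε + (a y + b y)/L) :=
          Finset.sum_le_sum pointwise
      _ = (∑ y ∈ S, phi (a y) (b y))/HH ε + (∑ y ∈ S, (a y + b y))/L := by
          rw [Finset.sum_add_distrib, Finset.sum_div, Finset.sum_div]
      _ ≤ D V / HH ε + 1/L := by
          have hsum1 : ∑ y, (a y + b y) = 1 := sum_mu hV
          have hμ1 : ∑ y ∈ S, (a y + b y) ≤ 1 := by
            rw [← hsum1, hS]
            exact Finset.sum_le_sum_of_subset_of_nonneg (Finset.filter_subset _ _)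
              (fun y _ _ => add_nonneg (han y) (hbn y))
          gcongr
  have step2 : SZ^2 ≤ D V * (D V / HH ε + 1/L) := by
    calc SZ^2 ≤ (∑ y ∈ S, phi (a y) (b y)) * (∑ y ∈ S, a y * b y / phi (a y) (b y)) := hCS
      _ ≤ D V * (D V / HH ε + 1/L) := by
          apply mul_le_mul hsub1 hsub2
          · exact Finset.sum_nonneg fun y hy => div_nonneg (mul_nonneg (han y) (hbn y)) (hmemS y hy).le
          · exact hDVnn
  calc D V.plus ≤ 10 * SZ^2 := step1
    _ ≤ 10 * (D V * (D V / HH ε + 1/L)) := by linarith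
    _ = 10 * (D V^2 / HH ε + D V / L) := by ring


lemma D_minus_eq_aux {V : PreChannel} (hV : Valid V) :
    D V.minus = 2 * D V - D V.plus := by linarith [chain hV]

lemma polarSeq_append (t r : List Bool) : ∀ V : PreChannel,
    polarSeq V (t ++ r) = polarSeq (polarSeq V t) r := by
  induction t with
  | nil => intro V; rfl
  | cons b rest ih =>
      intro V
      show polarSeq (if b then V.plus else V.minus) (rest ++ r) = _
      rw [ih]
      rfl

lemma polarSeq_cons (V : PreChannel) (b : Bool) (r : List Bool) :
    polarSeq V (b :: r) = polarSeq (if b then V.plus else V.minus) r := rfl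

lemma valid_polarSeq {V : PreChannel} (hV : Valid V) : ∀ s : List Bool,
    Valid (polarSeq V s) := by
  intro s
  induction s generalizing V with
  | nil => exact hV
  | cons b rest ih =>
      rw [polarSeq_cons]
      cases b
      · exact ih (valid_minus hV)
      · exact ih (valid_plus hV)

lemma D_minus_le {V : PreChannel} (hV : Valid V) : D V.minus ≤ 2 * D V := by
  have := chain hV
  have := D_nonneg (valid_plus hV)
  linarith

lemma D_plus_le2 {V : PreChannel} (hV : Valid V) : D V.plus ≤ 2 * D V := by
  have := chain hV
  have := D_nonneg (valid_minus hV)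
  linarith

lemma D_polarSeq_le {V : PreChannel} (hV : Valid V) : ∀ s : List Bool,
    D (polarSeq V s) ≤ 2^s.length * D V := by
  intro s
  induction s generalizing V with
  | nil => simp [polarSeq]
  | cons b rest ih =>
      rw [polarSeq_cons]
      have h2 : D (if b then V.plus else V.minus) ≤ 2 * D V := by
        cases b
        · simpa using D_minus_le hV
        · simpa using D_plus_le2 hV
      have hvb : Valid (if b then V.plus else V.minus) := by
        cases b
        · simpa using valid_minus hV
        · simpa using valid_plus hV
      calc D (polarSeq (if b then V.plus else V.minus) rest)
          ≤ 2^rest.length * D (if b then V.plus else V.minus) := ih hvb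
        _ ≤ 2^rest.length * (2 * D V) := by
            have : (0:ℝ) ≤ 2^rest.length := by positivity
            nlinarith
        _ = 2^(b :: rest).length * D V := by
            rw [List.length_cons]
            ring

lemma polarSeq_replicate_succ (V : PreChannel) (k : ℕ) :
    polarSeq V (List.replicate (k+1) false)
      = (polarSeq V (List.replicate k false)).minus := by
  rw [List.replicate_succ', polarSeq_append]
  rfl

lemma D_allminus {V : PreChannel} (hV : Valid V) {ε : ℝ} (hε0 : 0 < ε) (hε1 : ε ≤ 1/2)
    (k : ℕ) :
    0 ≤ 2^k * D V - D (polarSeq V (List.replicate k false))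
      ∧ 2^k * D V - D (polarSeq V (List.replicate k false))
        ≤ ((4:ℝ)^k - 2^k) * (10 * (D V^2 / HH ε + D V / Real.logb 2 (1/ε))) := by
  set L := Real.logb 2 (1/ε) with hLdef
  have hL1 : 1 ≤ L := logb_one_div_ge_one hε0 hε1
  have hLpos : 0 < L := lt_of_lt_of_le one_pos hL1
  have hHpos := HH_pos hε0 hε1
  have hDVnn := D_nonneg hV
  set P := 10 * (D V^2 / HH ε + D V / L) with hPdef
  have hPnn : 0 ≤ P := by
    rw [hPdef]
    have h1 : 0 ≤ D V^2 / HH ε := by positivity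
    have h2 : 0 ≤ D V / L := by positivity
    linarith
  induction k with
  | zero =>
      have h0 : polarSeq V (List.replicate 0 false) = V := rfl
      rw [h0]
      norm_num
  | succ k ih =>
      obtain ⟨ih1, ih2⟩ := ih
      set Vk := polarSeq V (List.replicate k false) with hVk
      have hVkvalid : Valid Vk := valid_polarSeq hV _
      have hVknn := D_nonneg hVkvalid
      have hVkle : D Vk ≤ 2^k * D V := by linarith
      have hplus_nn := D_nonneg (valid_plus hVkvalid)
      have hchain := D_minus_eq_aux hVkvalid
      rw [polarSeq_replicate_succ, ← hVk]
      have hplusle : D Vk.plus ≤ (4:ℝ)^k * P := by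
        have h1 := D_plus_le hVkvalid hε0 hε1
        rw [← hLdef] at h1
        have hsq : D Vk^2 ≤ (4:ℝ)^k * D V^2 := by
          have h4 : ((2:ℝ)^k)^2 = 4^k := by
            rw [← pow_mul, show (4:ℝ) = 2^2 from by norm_num, ← pow_mul, mul_comm]
          nlinarith [pow_nonneg (show (0:ℝ) ≤ 2 by norm_num) k]
        have h2 : D Vk^2 / HH ε ≤ ((4:ℝ)^k * D V^2) / HH ε := (div_le_div_iff_of_pos_right hHpos).mpr hsq
        have h3 : D Vk / L ≤ ((4:ℝ)^k * D V) / L := by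
          refine (div_le_div_iff_of_pos_right hLpos).mpr (le_trans hVkle ?_)
          have h24 : (2:ℝ)^k ≤ 4^k := pow_le_pow_left₀ (by norm_num) (by norm_num) k
          nlinarith
        have e7 : (4:ℝ)^k * P = 10 * (((4:ℝ)^k * D V^2)/HH ε + ((4:ℝ)^k * D V)/L) := by
          rw [hPdef]; ring
        rw [e7]
        linarith
      constructor
      · have : (2:ℝ)^(k+1) = 2 * 2^k := by ring
        rw [this, hchain]
        linarith
      · rw [hchain]
        have e1 : (2:ℝ)^(k+1) = 2 * 2^k := by ring
        have e2 : (4:ℝ)^(k+1) = 4 * 4^k := by ring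
        rw [e1, e2]
        nlinarith [pow_nonneg (by norm_num : (0:ℝ) ≤ 2) k, pow_nonneg (by norm_num : (0:ℝ) ≤ 4) k,
          mul_nonneg (pow_nonneg (by norm_num : (0:ℝ) ≤ 4) k) hPnn]


lemma D_seq_plus_le {V : PreChannel} (hV : Valid V) {ε : ℝ} (hε0 : 0 < ε) (hε1 : ε ≤ 1/2)
    {s : List Bool} (hs : true ∈ s) :
    D (polarSeq V s) ≤ (2:ℝ)^s.length
      * (10 * (((2:ℝ)^s.length * D V)^2 / HH ε
          + ((2:ℝ)^s.length * D V) / Real.logb 2 (1/ε))) := by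
  set L := Real.logb 2 (1/ε) with hLdef
  have hL1 : 1 ≤ L := logb_one_div_ge_one hε0 hε1
  have hLpos : 0 < L := lt_of_lt_of_le one_pos hL1
  have hHpos := HH_pos hε0 hε1
  have hDVnn := D_nonneg hV
  obtain ⟨t, r, rfl⟩ := List.append_of_mem hs
  have h1 : polarSeq V (t ++ true :: r) = polarSeq ((polarSeq V t).plus) r := by
    rw [polarSeq_append]; rfl
  set Vt := polarSeq V t with hVt
  have hVtvalid : Valid Vt := valid_polarSeq hV t
  have hVtnn := D_nonneg hVtvalid
  have hlen : (t ++ true :: r).length = t.length + r.length + 1 := by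
    simp [List.length_append]; ring
  set X := (2:ℝ)^(t ++ true :: r).length * D V with hX
  have hXnn : 0 ≤ X := by positivity
  have hVtle : D Vt ≤ X := by
    refine le_trans (D_polarSeq_le hV t) ?_
    rw [hX]
    have : (2:ℝ)^t.length ≤ 2^(t ++ true :: r).length := by
      apply pow_le_pow_right₀ (by norm_num)
      rw [hlen]; omega
    nlinarith
  have h2 : D (polarSeq Vt.plus r) ≤ 2^r.length * D Vt.plus :=
    D_polarSeq_le (valid_plus hVtvalid) r
  have h3 : D Vt.plus ≤ 10 * (X^2 / HH ε + X / L) := by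
    have h4 := D_plus_le hVtvalid hε0 hε1
    rw [← hLdef] at h4
    have hsq : D Vt^2 ≤ X^2 := by nlinarith
    have h5 : D Vt^2 / HH ε ≤ X^2 / HH ε := (div_le_div_iff_of_pos_right hHpos).mpr hsq
    have h6 : D Vt / L ≤ X / L := (div_le_div_iff_of_pos_right hLpos).mpr hVtle
    linarith
  have hbr_nn : 0 ≤ 10 * (X^2 / HH ε + X / L) := by positivity
  have h7 : (2:ℝ)^r.length ≤ 2^(t ++ true :: r).length := by
    apply pow_le_pow_right₀ (by norm_num)
    rw [hlen]; omega
  calc D (polarSeq V (t ++ true :: r)) = D (polarSeq Vt.plus r) := by rw [h1, hVt]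
    _ ≤ 2^r.length * D Vt.plus := h2
    _ ≤ 2^r.length * (10 * (X^2 / HH ε + X / L)) := by
        have : (0:ℝ) ≤ 2^r.length := by positivity
        nlinarith
    _ ≤ 2^(t ++ true :: r).length * (10 * (X^2 / HH ε + X / L)) := by nlinarith

lemma tendsto_aux (g d : ℕ → ℝ) (hd0 : ∀ n, 0 < d n)
    (hd : Filter.Tendsto d Filter.atTop (nhds 0)) (C B : ℝ) (hB : 0 ≤ B)
    (h : ∀ ε : ℝ, 0 < ε → ε ≤ 1/2 → ∀ n,
      0 ≤ g n ∧ g n ≤ C / HH ε * d n + B / Real.logb 2 (1/ε)) :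
    Filter.Tendsto g Filter.atTop (nhds 0) := by
  rw [Metric.tendsto_atTop]
  intro η hη
  set M : ℝ := max 1 (2*B/η + 1) with hM
  have hM1 : 1 ≤ M := le_max_left _ _
  have hM0 : 0 < M := lt_of_lt_of_le one_pos hM1
  set ε : ℝ := (2:ℝ)^(-M) with hε
  have hε0 : 0 < ε := by positivity
  have hε1 : ε ≤ 1/2 := by
    rw [hε]
    have : (2:ℝ)^(-M) ≤ (2:ℝ)^(-(1:ℝ)) :=
      Real.rpow_le_rpow_of_exponent_le (by norm_num) (by linarith)
    calc (2:ℝ)^(-M) ≤ (2:ℝ)^(-(1:ℝ)) := this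
      _ = 1/2 := by
          rw [Real.rpow_neg_one]
          norm_num
  have hLε : Real.logb 2 (1/ε) = M := by
    rw [hε, one_div, ← Real.rpow_neg (by norm_num), neg_neg, Real.logb_rpow (by norm_num) (by norm_num)]
  have hBM : B / M < η/2 := by
    rw [div_lt_iff₀ hM0]
    have hMge : 2*B/η + 1 ≤ M := le_max_right _ _
    have e : η/2 * (2*B/η + 1) = B + η/2 := by field_simp
    nlinarith
  have hHpos := HH_pos hε0 hε1
  set K := C / HH ε with hK
  have hKd : Filter.Tendsto (fun n => K * d n) Filter.atTop (nhds 0) := by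
    have := hd.const_mul K
    simpa using this
  rw [Metric.tendsto_atTop] at hKd
  obtain ⟨N, hN⟩ := hKd (η/2 - B/M) (by linarith)
  refine ⟨N, fun n hn => ?_⟩
  have hgn := h ε hε0 hε1 n
  rw [hLε] at hgn
  have h1 : |K * d n - 0| < η/2 - B/M := hN n hn
  have h2 : K * d n < η/2 - B/M := by
    have := abs_lt.mp h1
    linarith [this.2]
  rw [Real.dist_eq, sub_zero, abs_of_nonneg hgn.1]
  calc g n ≤ K * d n + B / M := hgn.2
    _ < η := by linarith


lemma isBMS_valid {V : PreChannel} (h : IsBMS V) : Valid V := ⟨h.1, h.2.1⟩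

end PreChannel


/-- asymptotics of `1 − I(W^s)` for the all-minus sequence and for
sequences containing a plus. -/
theorem stmt14 (lam : ℕ) (hlam : 1 ≤ lam) (W : ℕ → PreChannel)
    (hBMS : ∀ n, (W n).IsBMS)
    (hδpos : ∀ n, 0 < 1 - cap (W n))
    (hδ0 : Filter.Tendsto (fun n => 1 - cap (W n)) Filter.atTop (nhds 0)) :
    (Filter.Tendsto (fun n =>
        (1 - cap (polarSeq (W n) (List.replicate lam false))) / (1 - cap (W n)))
      Filter.atTop (nhds (2 ^ lam))) ∧
    (∀ s : List Bool, s.length = lam → true ∈ s →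
      Filter.Tendsto (fun n => (1 - cap (polarSeq (W n) s)) / (1 - cap (W n)))
        Filter.atTop (nhds 0)) := by
  have hval : ∀ n, Valid (W n) := fun n => isBMS_valid (hBMS n)
  constructor
  · set g : ℕ → ℝ := fun n =>
      2^lam - (1 - cap (polarSeq (W n) (List.replicate lam false))) / (1 - cap (W n))
      with hg
    have hgt : Filter.Tendsto g Filter.atTop (nhds 0) := by
      apply tendsto_aux g (fun n => 1 - cap (W n)) hδpos hδ0
        ((4:ℝ)^lam * 10) ((4:ℝ)^lam * 10) (by positivity)
      intro ε hε0 hε1 n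
      set L := Real.logb 2 (1/ε) with hLdef
      have hL1 : 1 ≤ L := logb_one_div_ge_one hε0 hε1
      have hLpos : 0 < L := lt_of_lt_of_le one_pos hL1
      have hHpos := HH_pos hε0 hε1
      have hdn : 0 < 1 - cap (W n) := hδpos n
      have hDn : 1 - cap (W n) = D (W n) := one_sub_cap (hval n)
      have hnum : 1 - cap (polarSeq (W n) (List.replicate lam false))
          = D (polarSeq (W n) (List.replicate lam false)) :=
        one_sub_cap (valid_polarSeq (hval n) _)
      have hDs := D_allminus (hval n) hε0 hε1 lam
      rw [← hLdef] at hDs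
      set Dn := D (W n) with hDndef
      set Dms := D (polarSeq (W n) (List.replicate lam false)) with hDms
      have hDnpos : 0 < Dn := hDn ▸ hdn
      have hDnnn : 0 ≤ Dn := hDnpos.le
      have hgn : g n = (2^lam * Dn - Dms) / Dn := by
        rw [hg]
        dsimp only
        rw [hnum, hDn]
        field_simp
      constructor
      · rw [hgn]
        exact div_nonneg hDs.1 hDnnn
      · rw [hgn, hDn]
        have hbrnn : 0 ≤ 10 * (Dn^2/HH ε + Dn/L) := by positivity
        have hnumle : 2^lam * Dn - Dms ≤ (4:ℝ)^lam * (10 * (Dn^2/HH ε + Dn/L)) := by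
          have h24 : (4:ℝ)^lam - 2^lam ≤ 4^lam := by
            have : (0:ℝ) ≤ 2^lam := by positivity
            linarith
          nlinarith [hDs.2]
        have heq : ((4:ℝ)^lam * (10 * (Dn^2/HH ε + Dn/L))) / Dn
            = (4:ℝ)^lam * 10 / HH ε * Dn + (4:ℝ)^lam * 10 / L := by
          field_simp
        rw [← heq]
        exact (div_le_div_iff_of_pos_right hDnpos).mpr hnumle
    have heq2 : (fun n =>
        (1 - cap (polarSeq (W n) (List.replicate lam false))) / (1 - cap (W n)))
        = fun n => 2^lam - g n := by
      funext n
      rw [hg]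
      ring
    rw [heq2]
    have := hgt.const_sub ((2:ℝ)^lam)
    simpa using this
  · intro s hslen hsmem
    apply tendsto_aux _ (fun n => 1 - cap (W n)) hδpos hδ0
      ((2:ℝ)^lam * 4^lam * 10) ((2:ℝ)^lam * 2^lam * 10) (by positivity)
    intro ε hε0 hε1 n
    set L := Real.logb 2 (1/ε) with hLdef
    have hL1 : 1 ≤ L := logb_one_div_ge_one hε0 hε1
    have hLpos : 0 < L := lt_of_lt_of_le one_pos hL1
    have hHpos := HH_pos hε0 hε1
    have hdn : 0 < 1 - cap (W n) := hδpos n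
    have hDn : 1 - cap (W n) = D (W n) := one_sub_cap (hval n)
    have hnum : 1 - cap (polarSeq (W n) s) = D (polarSeq (W n) s) :=
      one_sub_cap (valid_polarSeq (hval n) _)
    have hDs := D_seq_plus_le (hval n) hε0 hε1 hsmem
    rw [← hLdef, hslen] at hDs
    set Dn := D (W n) with hDndef
    have hDnpos : 0 < Dn := hDn ▸ hdn
    have hseqnn : 0 ≤ D (polarSeq (W n) s) := D_nonneg (valid_polarSeq (hval n) _)
    constructor
    · rw [hnum, hDn]
      exact div_nonneg hseqnn hDnpos.le
    · rw [hnum, hDn]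
      have heq : ((2:ℝ)^lam * (10 * (((2:ℝ)^lam * Dn)^2 / HH ε + ((2:ℝ)^lam * Dn)/L))) / Dn
          = (2:ℝ)^lam * 4^lam * 10 / HH ε * Dn + (2:ℝ)^lam * 2^lam * 10 / L := by
        field_simp
        rw [show (4:ℝ)^lam = 2^(2*lam) from by rw [pow_mul]; norm_num]
        ring
      rw [← heq]
      exact (div_le_div_iff_of_pos_right hDnpos).mpr hDs
end

section
/- Let ε_l(x) = x − 1 + h₂( h₂⁻¹(1−x)·[2 − 2h₂⁻¹(1−x)] ) for x ∈ (0,1). Then lim_{δ→0⁺} ε_l(1−δ)/δ = 1; that is, ε_l(1−δ) = δ + o(δ) as δ → 0⁺. -/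
open scoped BigOperators

open PreChannel

section StmtAux
open Filter Topology Set Real

lemma h2_eq (x : ℝ) : h2 x = Real.binEntropy x / Real.log 2 := by
  simp only [h2, Real.binEntropy, Real.logb, Real.log_inv]
  ring

lemma h2_strictMono : StrictMonoOn h2 (Set.Icc 0 (1/2)) := by
  have h : Set.Icc (0:ℝ) (1/2) = Set.Icc 0 2⁻¹ := by norm_num
  rw [h]
  intro a ha b hb hab
  rw [h2_eq, h2_eq]
  exact (div_lt_div_iff_of_pos_right (Real.log_pos one_lt_two)).mpr
    (Real.binEntropy_strictMonoOn ha hb hab)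

lemma h2_zero : h2 0 = 0 := by simp [h2_eq]

lemma h2_half : h2 (1/2) = 1 := by
  rw [h2_eq]
  rw [show (1:ℝ)/2 = 2⁻¹ by norm_num, Real.binEntropy_two_inv, div_self (Real.log_ne_zero_of_pos_of_ne_one two_pos (by norm_num))]

lemma h2_surj : Set.Icc (0:ℝ) 1 ⊆ h2 '' Set.Icc 0 (1/2) := by
  have hc : ContinuousOn h2 (Set.Icc 0 (1/2)) := by
    have : Continuous fun x : ℝ => Real.binEntropy x / Real.log 2 :=
      Real.binEntropy_continuous.div_const _
    exact (this.congr fun x => (h2_eq x).symm).continuousOn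
  have := intermediate_value_Icc (by norm_num : (0:ℝ) ≤ 1/2) hc
  rwa [h2_zero, h2_half] at this

lemma h2inv_mem {v : ℝ} (hv : v ∈ Set.Icc (0:ℝ) 1) : h2inv v ∈ Set.Icc (0:ℝ) (1/2) :=
  Function.invFunOn_mem (by obtain ⟨a, ha, hav⟩ := h2_surj hv; exact ⟨a, ha, hav⟩)

lemma h2_h2inv {v : ℝ} (hv : v ∈ Set.Icc (0:ℝ) 1) : h2 (h2inv v) = v :=
  Function.invFunOn_eq (by obtain ⟨a, ha, hav⟩ := h2_surj hv; exact ⟨a, ha, hav⟩)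

lemma h2_pos {x : ℝ} (h0 : 0 < x) (h1 : x < 1) : 0 < h2 x := by
  rw [h2_eq]
  exact div_pos (Real.binEntropy_pos h0 h1) (Real.log_pos one_lt_two)

-- K1
lemma h2inv_tendsto : Tendsto h2inv (𝓝[>] (0:ℝ)) (𝓝[>] (0:ℝ)) := by
  have hev : ∀ᶠ δ in 𝓝[>] (0:ℝ), δ ∈ Set.Ioo (0:ℝ) 1 :=
    Ioo_mem_nhdsGT_of_mem (by norm_num)
  have hpos : ∀ᶠ δ in 𝓝[>] (0:ℝ), 0 < h2inv δ := by
    filter_upwards [hev] with δ hδ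
    have hm := h2inv_mem (Set.mem_Icc.2 ⟨hδ.1.le, hδ.2.le⟩)
    rcases lt_or_eq_of_le hm.1 with h | h
    · exact h
    · exfalso
      have := h2_h2inv (Set.mem_Icc.2 ⟨hδ.1.le, hδ.2.le⟩)
      rw [← h, h2_zero] at this
      exact hδ.1.ne this
  rw [tendsto_nhdsWithin_iff]
  refine ⟨?_, hpos.mono fun δ h => h⟩
  rw [tendsto_order]
  constructor
  · intro a ha
    filter_upwards [hpos] with δ hδ using ha.trans hδ
  · intro a ha
    set ε := min a (1/2) with hε
    have hε0 : 0 < ε := lt_min ha (by norm_num)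
    have hε1 : ε < 1 := lt_of_le_of_lt (min_le_right _ _) (by norm_num)
    have hε2 : ε ≤ 1/2 := min_le_right _ _
    have hh2ε : 0 < h2 ε := h2_pos hε0 hε1
    have hmem : ∀ᶠ δ in 𝓝[>] (0:ℝ), δ ∈ Set.Ioo (0:ℝ) (min (h2 ε) 1) :=
      Ioo_mem_nhdsGT_of_mem (by exact ⟨le_refl _, lt_min hh2ε one_pos⟩)
    filter_upwards [hmem] with δ hδ
    have hδ1 : δ ∈ Set.Icc (0:ℝ) 1 :=
      ⟨hδ.1.le, (lt_of_lt_of_le hδ.2 (min_le_right _ _)).le⟩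
    by_contra hcon
    push_neg at hcon
    have hεle : ε ≤ h2inv δ := le_trans (min_le_left _ _) hcon
    have h1 : h2 ε ≤ h2 (h2inv δ) :=
      h2_strictMono.monotoneOn ⟨hε0.le, hε2⟩ (h2inv_mem hδ1) hεle
    rw [h2_h2inv hδ1] at h1
    exact absurd (lt_of_le_of_lt h1 (lt_of_lt_of_le hδ.2 (min_le_left _ _)))
      (lt_irrefl _)

lemma neg_log_one_sub_div :
    Tendsto (fun y : ℝ => -Real.log (1 - y) / y) (𝓝[>] (0:ℝ)) (𝓝 1) := by
  have h1 : HasDerivAt (fun y : ℝ => (1:ℝ) - y) (-1) 0 := (hasDerivAt_id 0).const_sub 1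
  have hd : HasDerivAt (fun y : ℝ => -Real.log (1 - y)) 1 0 := by
    have h2 : HasDerivAt (fun y : ℝ => -Real.log (1 - y)) (-(-1 / (1 - 0))) 0 := (h1.log (by norm_num)).neg
    convert h2 using 1
    norm_num
  have hs := hasDerivAt_iff_tendsto_slope.mp hd
  have hs' : Tendsto (slope (fun y : ℝ => -Real.log (1 - y)) 0) (𝓝[>] (0:ℝ)) (𝓝 1) :=
    hs.mono_left (nhdsWithin_mono _ fun x hx => ne_of_gt hx)
  refine hs'.congr' ?_
  filter_upwards [self_mem_nhdsWithin] with y hy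
  simp [slope_def_field]

lemma neg_log_atTop : Tendsto (fun y : ℝ => -Real.log y) (𝓝[>] (0:ℝ)) atTop :=
  tendsto_neg_atBot_atTop.comp Real.tendsto_log_nhdsGT_zero

lemma inv_neg_log_tendsto : Tendsto (fun y : ℝ => (-Real.log y)⁻¹) (𝓝[>] (0:ℝ)) (𝓝 0) := by
  have := neg_log_atTop.inv_tendsto_atTop
  simpa [Pi.inv_def] using this

lemma inv_log_tendsto : Tendsto (fun y : ℝ => (Real.log y)⁻¹) (𝓝[>] (0:ℝ)) (𝓝 0) := by
  have := inv_neg_log_tendsto.neg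
  simp only [neg_zero] at this
  refine this.congr fun y => ?_
  rw [inv_neg, neg_neg]

lemma one_sub_tendsto : Tendsto (fun y : ℝ => (1:ℝ) - y) (𝓝[>] (0:ℝ)) (𝓝 1) := by
  have hc : Continuous fun y : ℝ => (1:ℝ) - y := by continuity
  have := hc.tendsto 0
  simp only [sub_zero] at this
  exact this.mono_left nhdsWithin_le_nhds

lemma log_one_sub_tendsto : Tendsto (fun y : ℝ => Real.log (1 - y)) (𝓝[>] (0:ℝ)) (𝓝 0) := by
  have := (Real.continuousAt_log (by norm_num : (1:ℝ) ≠ 0)).tendsto.comp one_sub_tendsto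
  simpa [Function.comp_def] using this

lemma R1 : Tendsto (fun y : ℝ => Real.binEntropy y / (-(y * Real.log y)))
    (𝓝[>] (0:ℝ)) (𝓝 1) := by
  have hinv := inv_neg_log_tendsto
  have ht : Tendsto (fun y : ℝ =>
      1 + ((1 - y) * (-Real.log (1 - y) / y)) * (-Real.log y)⁻¹) (𝓝[>] (0:ℝ)) (𝓝 1) := by
    have := ((one_sub_tendsto.mul neg_log_one_sub_div).mul hinv).const_add 1
    simpa using this
  refine ht.congr' ?_
  filter_upwards [Ioo_mem_nhdsGT_of_mem (by norm_num : (0:ℝ) ∈ Set.Ico 0 1)] with y hy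
  have hy0 : y ≠ 0 := hy.1.ne'
  have hly : Real.log y ≠ 0 := (Real.log_neg hy.1 hy.2).ne
  rw [Real.binEntropy, Real.log_inv, Real.log_inv]
  field_simp
  ring

lemma R2 : Tendsto (fun y : ℝ => (2*y*(1-y)) * Real.log (2*y*(1-y)) / (y * Real.log y))
    (𝓝[>] (0:ℝ)) (𝓝 2) := by
  have ht : Tendsto (fun y : ℝ =>
      2*(1-y) * (1 + (Real.log 2 + Real.log (1-y)) * (Real.log y)⁻¹)) (𝓝[>] (0:ℝ)) (𝓝 2) := by
    have h1 : Tendsto (fun y : ℝ => 2*(1-y)) (𝓝[>] (0:ℝ)) (𝓝 2) := by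
      have := one_sub_tendsto.const_mul 2
      simpa using this
    have h2 : Tendsto (fun y : ℝ => 1 + (Real.log 2 + Real.log (1-y)) * (Real.log y)⁻¹)
        (𝓝[>] (0:ℝ)) (𝓝 1) := by
      have := ((log_one_sub_tendsto.const_add (Real.log 2)).mul inv_log_tendsto).const_add 1
      simpa using this
    have := h1.mul h2
    simpa using this
  refine ht.congr' ?_
  filter_upwards [Ioo_mem_nhdsGT_of_mem (by norm_num : (0:ℝ) ∈ Set.Ico 0 1)] with y hy
  have hy0 : y ≠ 0 := hy.1.ne'
  have h1y : (1:ℝ) - y ≠ 0 := by linarith [hy.2]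
  have hly : Real.log y ≠ 0 := (Real.log_neg hy.1 hy.2).ne
  rw [show 2*y*(1-y) = 2*y*(1-y) from rfl,
    Real.log_mul (by positivity : (2:ℝ)*y ≠ 0) h1y,
    Real.log_mul (by norm_num : (2:ℝ) ≠ 0) hy0]
  field_simp
  ring

lemma g_tendsto : Tendsto (fun y : ℝ => 2*y*(1-y)) (𝓝[>] (0:ℝ)) (𝓝[>] (0:ℝ)) := by
  rw [tendsto_nhdsWithin_iff]
  constructor
  · have hc : Continuous fun y : ℝ => 2*y*(1-y) := by continuity
    have := hc.tendsto 0
    norm_num at this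
    exact this.mono_left nhdsWithin_le_nhds
  · filter_upwards [Ioo_mem_nhdsGT_of_mem (by norm_num : (0:ℝ) ∈ Set.Ico 0 1)] with y hy
    have := hy.1; have := hy.2
    show 0 < 2*y*(1-y)
    nlinarith

lemma K2 : Tendsto (fun y : ℝ => h2 (2*y*(1-y)) / h2 y) (𝓝[>] (0:ℝ)) (𝓝 2) := by
  have hrg : Tendsto (fun y : ℝ =>
      Real.binEntropy (2*y*(1-y)) / (-((2*y*(1-y)) * Real.log (2*y*(1-y)))))
      (𝓝[>] (0:ℝ)) (𝓝 1) := R1.comp g_tendsto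
  have hdiv := (hrg.div R1 one_ne_zero).mul R2
  have h12 : (1:ℝ)/1 * 2 = 2 := by norm_num
  rw [h12] at hdiv
  refine hdiv.congr' ?_
  filter_upwards [Ioo_mem_nhdsGT_of_mem (by norm_num : (0:ℝ) ∈ Set.Ico 0 (1/2))] with y hy
  have hy0 : 0 < y := hy.1
  have hy2 : y < 1/2 := hy.2
  have hy1 : y < 1 := by linarith
  have ha0 : 0 < 2*y*(1-y) := by nlinarith
  have ha2 : 2*y*(1-y) < 1/2 := by nlinarith [sq_nonneg (2*y - 1)]
  have ha1 : 2*y*(1-y) < 1 := by linarith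
  have hby : Real.binEntropy y ≠ 0 := (Real.binEntropy_pos hy0 hy1).ne'
  have hba : Real.binEntropy (2*y*(1-y)) ≠ 0 := (Real.binEntropy_pos ha0 ha1).ne'
  have hly : Real.log y ≠ 0 := (Real.log_neg hy0 hy1).ne
  have hla : Real.log (2*y*(1-y)) ≠ 0 := (Real.log_neg ha0 ha1).ne
  have hl2 : Real.log 2 ≠ 0 := (Real.log_pos one_lt_two).ne'
  have h1y : (1:ℝ) - y ≠ 0 := by linarith
  rw [h2_eq, h2_eq]
  simp only [Pi.div_apply]
  field_simp

end StmtAux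

open Filter Topology Set Real in
/-- `ε_l(1−δ) = δ + o(δ)` as `δ → 0⁺`. -/
theorem stmt15 :
    Filter.Tendsto (fun δ : ℝ => epsl (1 - δ) / δ)
      (nhdsWithin 0 (Set.Ioi 0)) (nhds 1) := by
  have hcomp := K2.comp h2inv_tendsto
  have h := hcomp.sub_const 1
  rw [show (2:ℝ) - 1 = 1 by norm_num] at h
  refine h.congr' ?_
  filter_upwards [Ioo_mem_nhdsGT_of_mem (by norm_num : (0:ℝ) ∈ Set.Ico 0 1)] with δ hδ
  have hδI : δ ∈ Set.Icc (0:ℝ) 1 := ⟨hδ.1.le, hδ.2.le⟩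
  have hy := h2_h2inv hδI
  have hδ0 : δ ≠ 0 := hδ.1.ne'
  show h2 (2 * h2inv δ * (1 - h2inv δ)) / h2 (h2inv δ) - 1 = epsl (1 - δ) / δ
  rw [epsl, show (1:ℝ) - (1 - δ) = δ by ring,
    show h2inv δ * (2 - 2 * h2inv δ) = 2 * h2inv δ * (1 - h2inv δ) by ring, hy]
  field_simp
  ring
end
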